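/- No set K of 14 points in PG(2,7) has line spectrum (a_0, a_2, a_3, a_4) = (11, 31, 10, 5) with all other a_i = 0. -/

import Mathlib

open Module
open scoped Classical

instance : Fact (Nat.Prime 7) := ⟨by norm_num⟩

namespace Stmt17Aux

open Finset

abbrev FF : Type := ZMod 7
abbrev VV : Type := Fin 3 → ZMod 7

instance : Finite (Submodule FF VV) :=
  Finite.of_injective (fun s => (s : Set VV)) SetLike.coe_injective

noncomputable instance : Fintype (Submodule FF VV) := Fintype.ofFinite _

lemma fiber_card {W : Type} [AddCommGroup W] [Module FF W] [Fintype W]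
    (P : Submodule FF W) (hP : finrank FF P = 1) :
    Fintype.card {v : {v : W // v ≠ 0} // Submodule.span FF {v.1} = P} = 6 := by
  classical
  have e : {v : {v : W // v ≠ 0} // Submodule.span FF {v.1} = P} ≃ {w : P // w ≠ 0} :=
    { toFun := fun v => ⟨⟨v.1.1, le_of_eq v.2 (Submodule.mem_span_singleton_self _)⟩, by
        simp only [ne_eq, Submodule.mk_eq_zero]
        exact v.1.2⟩
      invFun := fun w => ⟨⟨w.1.1, fun h => w.2 (Subtype.ext h)⟩, by
        apply Submodule.eq_of_le_of_finrank_le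
        · rw [Submodule.span_le, Set.singleton_subset_iff]; exact w.1.2
        · rw [hP, finrank_span_singleton (fun h => w.2 (Subtype.ext h))]⟩
      left_inv := fun v => by ext; rfl
      right_inv := fun w => by ext; rfl }
  rw [Fintype.card_congr e]
  have hcP : Fintype.card P = 7 := by
    rw [card_eq_pow_finrank (K := FF) (V := P), hP, pow_one, ZMod.card]
  rw [Fintype.card_subtype]
  rw [Finset.filter_ne', Finset.card_erase_of_mem (Finset.mem_univ _), Finset.card_univ, hcP]

lemma aux_count (W : Type) [AddCommGroup W] [Module FF W] [Fintype W]
    [Fintype (Submodule FF W)] :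
    (univ.filter fun P : Submodule FF W => finrank FF P = 1).card * 6
      = Fintype.card W - 1 := by
  classical
  have key := Finset.card_eq_sum_card_fiberwise
    (s := (univ : Finset {v : W // v ≠ 0}))
    (t := univ.filter fun P : Submodule FF W => finrank FF P = 1)
    (f := fun v => Submodule.span FF {v.1})
    (fun v _ => by
      rw [Finset.mem_coe, mem_filter]
      exact ⟨mem_univ _, finrank_span_singleton v.2⟩)
  have h1 : (univ : Finset {v : W // v ≠ 0}).card = Fintype.card W - 1 := by
    rw [Finset.card_univ, Fintype.card_subtype, Finset.filter_ne',
      Finset.card_erase_of_mem (mem_univ _), card_univ]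
  have h2 : ∀ P ∈ univ.filter (fun P : Submodule FF W => finrank FF P = 1),
      (univ.filter (fun v : {v : W // v ≠ 0} => Submodule.span FF {v.1} = P)).card = 6 := by
    intro P hP
    rw [mem_filter] at hP
    rw [← Fintype.card_subtype]
    exact fiber_card P hP.2
  rw [h1, Finset.sum_congr rfl h2, Finset.sum_const, smul_eq_mul] at key
  omega

lemma total_points :
    (univ.filter fun P : Submodule FF VV => finrank FF P = 1).card = 57 := by
  have h := aux_count VV
  have hV : Fintype.card VV = 343 := by
    rw [card_eq_pow_finrank (K := FF) (V := VV), finrank_fin_fun, ZMod.card]; norm_num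
  rw [hV] at h
  omega

lemma points_on_line {L : Submodule FF VV} (hL : finrank FF L = 2) :
    (univ.filter fun Q : Submodule FF VV => finrank FF Q = 1 ∧ Q ≤ L).card = 8 := by
  classical
  letI : Fintype (Submodule FF L) := Fintype.ofFinite _
  have h := aux_count (↥L)
  have hcL : Fintype.card ↥L = 49 := by
    rw [card_eq_pow_finrank (K := FF) (V := ↥L), hL, ZMod.card]; norm_num
  have hbij : (univ.filter fun P : Submodule FF ↥L => finrank FF P = 1).card
      = (univ.filter fun Q : Submodule FF VV => finrank FF Q = 1 ∧ Q ≤ L).card := by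
    apply Finset.card_bij (fun P _ => Submodule.map L.subtype P)
    · intro P hP
      rw [mem_filter] at hP ⊢
      refine ⟨mem_univ _, ?_, Submodule.map_subtype_le L P⟩
      rw [Submodule.finrank_map_subtype_eq]; exact hP.2
    · intro P1 _ P2 _ heq
      exact Submodule.map_injective_of_injective L.injective_subtype heq
    · intro Q hQ
      rw [mem_filter] at hQ
      obtain ⟨-, hQ1, hQL⟩ := hQ
      have hmc : Submodule.map L.subtype (Submodule.comap L.subtype Q) = Q := by
        rw [Submodule.map_comap_subtype, inf_eq_right.mpr hQL]
      refine ⟨Submodule.comap L.subtype Q, ?_, hmc⟩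
      rw [mem_filter]
      refine ⟨mem_univ _, ?_⟩
      have := Submodule.finrank_map_subtype_eq L (Submodule.comap L.subtype Q)
      rw [hmc] at this
      omega
  rw [hbij, hcL] at h
  omega

lemma rank_sup {P Q : Submodule FF VV} (hP : finrank FF P = 1) (hQ : finrank FF Q = 1)
    (hne : P ≠ Q) : finrank FF ↥(P ⊔ Q) = 2 := by
  have hinf : P ⊓ Q = ⊥ := by
    by_contra hbot
    have h0 : finrank FF ↥(P ⊓ Q) ≠ 0 := fun h => hbot (Submodule.finrank_eq_zero.mp h)
    have hle1 : finrank FF ↥(P ⊓ Q) ≤ finrank FF ↥P :=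
      Submodule.finrank_mono inf_le_left
    have e1 : P ⊓ Q = P := Submodule.eq_of_le_of_finrank_le inf_le_left (by omega)
    have hle2 : finrank FF ↥(P ⊓ Q) ≤ finrank FF ↥Q :=
      Submodule.finrank_mono inf_le_right
    have e2 : P ⊓ Q = Q := Submodule.eq_of_le_of_finrank_le inf_le_right (by omega)
    exact hne (e1 ▸ e2)
  have := Submodule.finrank_sup_add_finrank_inf_eq P Q
  rw [hinf, hP, hQ] at this
  have hb : finrank FF (⊥ : Submodule FF VV) = 0 := finrank_bot FF VV
  omega

lemma line_eq {P Q L : Submodule FF VV} (hP : finrank FF P = 1) (hQ : finrank FF Q = 1)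
    (hne : P ≠ Q) (hL : finrank FF L = 2) (h1 : P ≤ L) (h2 : Q ≤ L) : L = P ⊔ Q := by
  have hs := rank_sup hP hQ hne
  exact (Submodule.eq_of_le_of_finrank_le (sup_le h1 h2) (by rw [hs, hL])).symm

/-- The pencil of lines through a point `Z` partitions any set of rank-1 points distinct
from `Z`. -/
lemma partition_count {Z : Submodule FF VV} (hZ : finrank FF Z = 1)
    (S : Finset (Submodule FF VV))
    (hS : ∀ X ∈ S, finrank FF X = 1 ∧ X ≠ Z) :
    ∑ L ∈ univ.filter (fun L : Submodule FF VV => finrank FF L = 2 ∧ Z ≤ L),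
      (S.filter (fun X => X ≤ L)).card = S.card := by
  classical
  have key := Finset.card_eq_sum_card_fiberwise
    (s := S)
    (t := univ.filter (fun L : Submodule FF VV => finrank FF L = 2 ∧ Z ≤ L))
    (f := fun X => Z ⊔ X)
    (fun X hX => by
      rw [Finset.mem_coe, mem_filter]
      exact ⟨mem_univ _, rank_sup hZ (hS X hX).1 (Ne.symm (hS X hX).2), le_sup_left⟩)
  rw [key]
  apply Finset.sum_congr rfl
  intro L hL
  rw [mem_filter] at hL
  congr 1
  apply Finset.filter_congr
  intro X hX
  constructor
  · intro hXL
    exact Submodule.eq_of_le_of_finrank_le (sup_le hL.2.2 hXL)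
      (by rw [rank_sup hZ (hS X hX).1 (Ne.symm (hS X hX).2), hL.2.1])
  · intro hXL
    exact le_of_le_of_eq (le_sup_right (a := Z)) hXL

lemma lines_through_card {Z : Submodule FF VV} (hZ : finrank FF Z = 1) :
    (univ.filter (fun L : Submodule FF VV => finrank FF L = 2 ∧ Z ≤ L)).card = 8 := by
  classical
  have key := Finset.card_eq_sum_card_fiberwise
    (s := (univ.filter fun P : Submodule FF VV => finrank FF P = 1).erase Z)
    (t := univ.filter (fun L : Submodule FF VV => finrank FF L = 2 ∧ Z ≤ L))
    (f := fun X => Z ⊔ X)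
    (fun X hX => by
      rw [Finset.mem_coe, mem_erase, mem_filter] at hX
      rw [Finset.mem_coe, mem_filter]
      exact ⟨mem_univ _, rank_sup hZ hX.2.2 (Ne.symm hX.1), le_sup_left⟩)
  have h56 : ((univ.filter fun P : Submodule FF VV => finrank FF P = 1).erase Z).card = 56 := by
    rw [Finset.card_erase_of_mem (by rw [mem_filter]; exact ⟨mem_univ _, hZ⟩), total_points]
  have h7 : ∀ L ∈ univ.filter (fun L : Submodule FF VV => finrank FF L = 2 ∧ Z ≤ L),
      (((univ.filter fun P : Submodule FF VV => finrank FF P = 1).erase Z).filter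
        (fun X => Z ⊔ X = L)).card = 7 := by
    intro L hL
    rw [mem_filter] at hL
    have hfib : ((univ.filter fun P : Submodule FF VV => finrank FF P = 1).erase Z).filter
        (fun X => Z ⊔ X = L)
        = (univ.filter fun Q : Submodule FF VV => finrank FF Q = 1 ∧ Q ≤ L).erase Z := by
      ext X
      simp only [mem_filter, mem_erase, mem_univ, true_and]
      constructor
      · rintro ⟨⟨hXZ, hX1⟩, hXL⟩
        exact ⟨hXZ, hX1, hXL ▸ le_sup_right⟩
      · rintro ⟨hXZ, hX1, hXL⟩
        refine ⟨⟨hXZ, hX1⟩, ?_⟩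
        exact Submodule.eq_of_le_of_finrank_le (sup_le hL.2.2 hXL)
          (by rw [rank_sup hZ hX1 (Ne.symm hXZ), hL.2.1])
    rw [hfib, Finset.card_erase_of_mem
      (by rw [mem_filter]; exact ⟨mem_univ _, hZ, hL.2.2⟩), points_on_line hL.2.1]
  rw [h56, Finset.sum_congr rfl h7, Finset.sum_const, smul_eq_mul] at key
  omega

lemma odd_sq_bound {d : ℕ} (hd : d % 2 = 1) : 3 * d ≤ d * d - d + 3 := by
  obtain ⟨k, rfl⟩ : ∃ k, d = 2 * k + 1 := ⟨d / 2, by omega⟩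
  have h1 : (2 * k + 1) * (2 * k + 1) = 4 * (k * k) + 4 * k + 1 := by ring
  have h2 : k ≤ k * k := by
    rcases Nat.eq_zero_or_pos k with h | h
    · simp [h]
    · exact Nat.le_mul_of_pos_left k h
  omega


lemma main (K : Finset (Submodule FF VV))
    (hpts : ∀ P ∈ K, finrank FF P = 1)
    (hcard : K.card = 14)
    (a : ℕ → ℕ)
    (ha : ∀ i, a i = Nat.card {L : Submodule FF VV //
        finrank FF L = 2 ∧ (K.filter fun P => P ≤ L).card = i})
    (h3 : a 3 = 10)
    (hother : ∀ i, i ≠ 0 → i ≠ 2 → i ≠ 3 → i ≠ 4 → a i = 0) : False := by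
  classical
  have hconv : ∀ i, a i = (univ.filter fun L : Submodule FF VV =>
      finrank FF L = 2 ∧ (K.filter fun P => P ≤ L).card = i).card := by
    intro i
    rw [ha i, Nat.card_eq_fintype_card, Fintype.card_subtype]
  -- every line meets K in 0, 2, 3 or 4 points
  have hmvals : ∀ L : Submodule FF VV, finrank FF L = 2 →
      (K.filter fun P => P ≤ L).card = 0 ∨ (K.filter fun P => P ≤ L).card = 2 ∨
      (K.filter fun P => P ≤ L).card = 3 ∨ (K.filter fun P => P ≤ L).card = 4 := by
    intro L hL
    by_contra hcon
    push_neg at hcon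
    obtain ⟨c0, c2, c3, c4⟩ := hcon
    have hz := hother _ c0 c2 c3 c4
    rw [hconv] at hz
    have hmem : L ∈ univ.filter (fun L' : Submodule FF VV =>
        finrank FF L' = 2 ∧ (K.filter fun P => P ≤ L').card = (K.filter fun P => P ≤ L).card) := by
      rw [mem_filter]; exact ⟨mem_univ _, hL, rfl⟩
    have := Finset.card_pos.mpr ⟨L, hmem⟩
    omega
  -- the set of 3-lines
  set T : Finset (Submodule FF VV) :=
    univ.filter (fun L => finrank FF L = 2 ∧ (K.filter fun P => P ≤ L).card = 3) with hTdef
  have hTcard : T.card = 10 := by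
    rw [hTdef, ← hconv 3, h3]
  have hTrk : ∀ L ∈ T, finrank FF L = 2 := by
    intro L hL; rw [hTdef, mem_filter] at hL; exact hL.2.1
  have hTm : ∀ L ∈ T, (K.filter fun P => P ≤ L).card = 3 := by
    intro L hL; rw [hTdef, mem_filter] at hL; exact hL.2.2
  -- parity of the number of 3-lines through a point of K
  have hA : ∀ P ∈ K, (T.filter fun L => P ≤ L).card % 2 = 1 := by
    intro P hP
    have hP1 := hpts P hP
    have hpart := partition_count hP1 (K.erase P)
      (fun X hX => ⟨hpts X (Finset.mem_of_mem_erase hX), Finset.ne_of_mem_erase hX⟩)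
    rw [Finset.card_erase_of_mem hP, hcard] at hpart
    set SP := univ.filter (fun L : Submodule FF VV => finrank FF L = 2 ∧ P ≤ L) with hSPdef
    have hSPcard : SP.card = 8 := lines_through_card hP1
    have hPin : ∀ L ∈ SP, P ∈ K.filter (fun X => X ≤ L) := by
      intro L hL
      rw [hSPdef, mem_filter] at hL
      rw [mem_filter]
      exact ⟨hP, hL.2.2⟩
    have hsum : ∑ L ∈ SP, (K.filter fun X => X ≤ L).card = 21 := by
      have h21 : ∑ L ∈ SP, (((K.erase P).filter (fun X => X ≤ L)).card + 1) = 21 := by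
        rw [Finset.sum_add_distrib, hpart, Finset.sum_const, hSPcard, smul_eq_mul]
      rw [← h21]
      apply Finset.sum_congr rfl
      intro L hL
      have h1 : 1 ≤ (K.filter fun X => X ≤ L).card := Finset.card_pos.mpr ⟨P, hPin L hL⟩
      rw [Finset.filter_erase, Finset.card_erase_of_mem (hPin L hL)]
      omega
    have hpar : (∑ L ∈ SP, (K.filter fun X => X ≤ L).card) % 2
        = (SP.filter (fun L => (K.filter fun X => X ≤ L).card = 3)).card % 2 := by
      rw [Finset.sum_nat_mod, Finset.card_filter]
      congr 1
      apply Finset.sum_congr rfl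
      intro L hL
      have h1 : 1 ≤ (K.filter fun X => X ≤ L).card := Finset.card_pos.mpr ⟨P, hPin L hL⟩
      have hrk : finrank FF L = 2 := by
        have := hL; rw [hSPdef, mem_filter] at this; exact this.2.1
      rcases hmvals L hrk with h | h | h | h <;> simp [h]
    have hfilT : SP.filter (fun L => (K.filter fun X => X ≤ L).card = 3)
        = T.filter (fun L => P ≤ L) := by
      ext L
      simp only [hSPdef, hTdef, mem_filter, mem_univ, true_and]
      tauto
    rw [hsum, hfilT] at hpar
    omega
  -- total incidence count
  have hB : ∑ P ∈ K, (T.filter fun L => P ≤ L).card = 30 := by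
    calc ∑ P ∈ K, (T.filter fun L => P ≤ L).card
        = ∑ P ∈ K, ∑ L ∈ T, (if P ≤ L then 1 else 0) := by
          apply Finset.sum_congr rfl
          intro P _
          exact Finset.card_filter _ _
      _ = ∑ L ∈ T, ∑ P ∈ K, (if P ≤ L then 1 else 0) := Finset.sum_comm
      _ = ∑ L ∈ T, (K.filter fun P => P ≤ L).card := by
          apply Finset.sum_congr rfl
          intro L _
          exact (Finset.card_filter _ _).symm
      _ = ∑ L ∈ T, 3 := Finset.sum_congr rfl hTm
      _ = 30 := by rw [Finset.sum_const, hTcard, smul_eq_mul]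
  -- pairs of 3-lines meeting inside K
  set U : Finset (Submodule FF VV × Submodule FF VV) :=
    K.biUnion (fun P => (T.filter (fun L => P ≤ L)).offDiag) with hUdef
  have hUcard : U.card = ∑ P ∈ K, ((T.filter fun L => P ≤ L).card
      * (T.filter fun L => P ≤ L).card - (T.filter fun L => P ≤ L).card) := by
    rw [hUdef, Finset.card_biUnion]
    · exact Finset.sum_congr rfl (fun P _ => Finset.offDiag_card _)
    · intro P hPK Q hQK hne
      simp only [Function.onFun]
      rw [Finset.disjoint_left]
      rintro ⟨L1, L2⟩ h1 h2
      rw [Finset.mem_offDiag] at h1 h2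
      obtain ⟨hL1P, hL2P, hne12⟩ := h1
      obtain ⟨hL1Q, hL2Q, -⟩ := h2
      rw [mem_filter] at hL1P hL2P hL1Q hL2Q
      have hP1 := hpts P hPK
      have hQ1 := hpts Q hQK
      have e1 : L1 = P ⊔ Q := line_eq hP1 hQ1 hne (hTrk L1 hL1P.1) hL1P.2 hL1Q.2
      have e2 : L2 = P ⊔ Q := line_eq hP1 hQ1 hne (hTrk L2 hL2P.1) hL2P.2 hL2Q.2
      exact hne12 (e1.trans e2.symm)
  have hUsub : U ⊆ T.offDiag := by
    intro p hp
    rw [hUdef, Finset.mem_biUnion] at hp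
    obtain ⟨P, -, hp⟩ := hp
    rw [Finset.mem_offDiag] at hp ⊢
    exact ⟨(mem_filter.mp hp.1).1, (mem_filter.mp hp.2.1).1, hp.2.2⟩
  -- pairs of disjoint 3-lines
  set Dset : Finset (Submodule FF VV × Submodule FF VV) :=
    T.offDiag.filter (fun p => ∀ Q ∈ K, ¬(Q ≤ p.1 ∧ Q ≤ p.2)) with hDdef
  have hdisj : Disjoint U Dset := by
    rw [Finset.disjoint_left]
    intro p hpU hpD
    rw [hUdef, Finset.mem_biUnion] at hpU
    obtain ⟨P, hPK, hp⟩ := hpU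
    rw [Finset.mem_offDiag] at hp
    rw [hDdef, mem_filter] at hpD
    exact hpD.2 P hPK ⟨(mem_filter.mp hp.1).2, (mem_filter.mp hp.2.1).2⟩
  have hUD : U.card + Dset.card ≤ 90 := by
    have hsub : U ∪ Dset ⊆ T.offDiag :=
      Finset.union_subset hUsub (by rw [hDdef]; exact Finset.filter_subset _ _)
    have := Finset.card_le_card hsub
    rw [Finset.card_union_of_disjoint hdisj] at this
    rw [Finset.offDiag_card, hTcard] at this
    omega
  -- every 3-line has at least 5 disjoint 3-lines
  have hDlower : 50 ≤ Dset.card := by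
    have hfibw := Finset.card_eq_sum_card_fiberwise (s := Dset) (t := T)
      (f := Prod.fst) (fun p hp => by
        rw [hDdef, Finset.mem_coe, mem_filter, Finset.mem_offDiag] at hp
        exact hp.1.1)
    rw [hfibw]
    have hperL : ∀ L ∈ T, 5 ≤ (Dset.filter (fun p => p.1 = L)).card := by
      intro L hLT
      have hLrk : finrank FF L = 2 := hTrk L hLT
      have hLm : (K.filter fun P => P ≤ L).card = 3 := hTm L hLT
      set DL := T.filter (fun L' => L' ≠ L ∧ ∀ Q ∈ K, ¬(Q ≤ L ∧ Q ≤ L')) with hDLdef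
      have hDLmem : ∀ L' ∈ DL, L' ∈ T ∧ L' ≠ L ∧ ∀ Q ∈ K, ¬(Q ≤ L ∧ Q ≤ L') := by
        intro L' hL'
        rw [hDLdef, mem_filter] at hL'
        exact ⟨hL'.1, hL'.2.1, hL'.2.2⟩
      have hinj : DL.card ≤ (Dset.filter (fun p => p.1 = L)).card := by
        apply Finset.card_le_card_of_injOn (fun L' => (L, L'))
        · intro L' hL'
          obtain ⟨hT', hne', hdis'⟩ := hDLmem L' hL'
          rw [Finset.mem_coe, mem_filter, hDdef, mem_filter, Finset.mem_offDiag]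
          exact ⟨⟨⟨hLT, hT', Ne.symm hne'⟩, hdis'⟩, rfl⟩
        · intro x _ y _ h
          exact (Prod.ext_iff.mp h).2
      refine le_trans ?_ hinj
      -- external points of L
      set Ext := (univ.filter fun Q : Submodule FF VV => finrank FF Q = 1 ∧ Q ≤ L) \ K
        with hExtdef
      have hIntEq : (univ.filter fun Q : Submodule FF VV => finrank FF Q = 1 ∧ Q ≤ L) ∩ K
          = K.filter (fun P => P ≤ L) := by
        ext Q
        simp only [Finset.mem_inter, mem_filter, mem_univ, true_and]
        constructor
        · rintro ⟨⟨-, hQL⟩, hQK⟩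
          exact ⟨hQK, hQL⟩
        · rintro ⟨hQK, hQL⟩
          exact ⟨⟨hpts Q hQK, hQL⟩, hQK⟩
      have hExtcard : Ext.card = 5 := by
        have hsd := Finset.card_sdiff_add_card_inter
          (univ.filter fun Q : Submodule FF VV => finrank FF Q = 1 ∧ Q ≤ L) K
        rw [hIntEq, hLm, points_on_line hLrk] at hsd
        rw [hExtdef]
        omega
      have hex : ∀ Z ∈ Ext, ∃ L', L' ∈ DL ∧ Z ≤ L' := by
        intro Z hZ
        rw [hExtdef, Finset.mem_sdiff, mem_filter] at hZ
        obtain ⟨⟨-, hZ1, hZL⟩, hZK⟩ := hZ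
        have hpart := partition_count hZ1 K
          (fun X hX => ⟨hpts X hX, fun h => hZK (h ▸ hX)⟩)
        rw [hcard] at hpart
        have hLin : L ∈ univ.filter (fun L' : Submodule FF VV =>
            finrank FF L' = 2 ∧ Z ≤ L') := by
          rw [mem_filter]; exact ⟨mem_univ _, hLrk, hZL⟩
        have herase := Finset.sum_erase_add
          (univ.filter (fun L' : Submodule FF VV => finrank FF L' = 2 ∧ Z ≤ L'))
          (fun L' => (K.filter fun X => X ≤ L').card) hLin
        by_contra hno
        have heven : ∀ L' ∈ (univ.filter (fun L' : Submodule FF VV =>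
            finrank FF L' = 2 ∧ Z ≤ L')).erase L,
            (K.filter fun X => X ≤ L').card % 2 = 0 := by
          intro L' hL'
          have hL'ne := Finset.ne_of_mem_erase hL'
          have hL'mem := Finset.mem_of_mem_erase hL'
          rw [mem_filter] at hL'mem
          have hv := hmvals L' hL'mem.2.1
          have hm3 : (K.filter fun X => X ≤ L').card ≠ 3 := by
            intro h3'
            apply hno
            refine ⟨L', ?_, hL'mem.2.2⟩
            rw [hDLdef, mem_filter]
            refine ⟨by rw [hTdef, mem_filter]; exact ⟨mem_univ _, hL'mem.2.1, h3'⟩, hL'ne, ?_⟩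
            rintro Q hQK ⟨hQL, hQL'⟩
            have hQ1 := hpts Q hQK
            have hQZ : Q ≠ Z := fun h => hZK (h ▸ hQK)
            have e1 : L = Q ⊔ Z := line_eq hQ1 hZ1 hQZ hLrk hQL hZL
            have e2 : L' = Q ⊔ Z := line_eq hQ1 hZ1 hQZ hL'mem.2.1 hQL' hL'mem.2.2
            exact hL'ne (e2.trans e1.symm)
          omega
        have hzero : (∑ L' ∈ (univ.filter (fun L' : Submodule FF VV =>
            finrank FF L' = 2 ∧ Z ≤ L')).erase L,
            (K.filter fun X => X ≤ L').card) % 2 = 0 := by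
          rw [Finset.sum_nat_mod, Finset.sum_congr rfl heven]
          simp
        simp only [hLm] at herase
        omega
      let g : Submodule FF VV → Submodule FF VV := fun Z =>
        if h : ∃ L', L' ∈ DL ∧ Z ≤ L' then h.choose else ⊥
      have hgDL : ∀ Z ∈ Ext, g Z ∈ DL ∧ Z ≤ g Z := by
        intro Z hZ
        have h := hex Z hZ
        simp only [g, dif_pos h]
        exact h.choose_spec
      have hExtpts : ∀ Z ∈ Ext, finrank FF Z = 1 ∧ Z ≤ L ∧ Z ∉ K := by
        intro Z hZ
        rw [hExtdef, Finset.mem_sdiff, mem_filter] at hZ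
        exact ⟨hZ.1.2.1, hZ.1.2.2, hZ.2⟩
      have : Ext.card ≤ DL.card := by
        apply Finset.card_le_card_of_injOn g (fun Z hZ => (hgDL Z hZ).1)
        intro Z1 h1 Z2 h2 heq
        by_contra hne
        obtain ⟨hZ11, hZ1L, -⟩ := hExtpts Z1 h1
        obtain ⟨hZ21, hZ2L, -⟩ := hExtpts Z2 h2
        have hg1 := hgDL Z1 h1
        have hg2 := hgDL Z2 h2
        obtain ⟨hgT, hgneL, -⟩ := hDLmem _ hg1.1
        have e1 : L = Z1 ⊔ Z2 := line_eq hZ11 hZ21 hne hLrk hZ1L hZ2L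
        have e2 : g Z1 = Z1 ⊔ Z2 :=
          line_eq hZ11 hZ21 hne (hTrk _ hgT) hg1.2 (heq ▸ hg2.2)
        exact hgneL (e2.trans e1.symm)
      omega
    calc (50 : ℕ) = ∑ _L ∈ T, 5 := by rw [Finset.sum_const, hTcard, smul_eq_mul]
      _ ≤ ∑ L ∈ T, (Dset.filter (fun p => p.1 = L)).card := Finset.sum_le_sum hperL
  -- final contradiction
  have hptw : ∀ P ∈ K, 3 * (T.filter fun L => P ≤ L).card
      ≤ ((T.filter fun L => P ≤ L).card * (T.filter fun L => P ≤ L).card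
        - (T.filter fun L => P ≤ L).card) + 3 :=
    fun P hP => odd_sq_bound (hA P hP)
  have hsum3 := Finset.sum_le_sum hptw
  rw [Finset.sum_add_distrib, Finset.sum_const, hcard, smul_eq_mul, ← Finset.mul_sum, hB, ← hUcard] at hsum3
  omega

end Stmt17Aux

/-- no set `K` of `14` points in `PG(2,7)` has line spectrum
`(a 0, a 2, a 3, a 4) = (11, 31, 10, 5)` with all other `a i = 0`, where `a i`
counts the lines meeting `K` in exactly `i` points. -/
theorem stmt17 (K : Finset (Submodule (ZMod 7) (Fin 3 → ZMod 7)))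
    (hpts : ∀ P ∈ K, finrank (ZMod 7) P = 1)
    (hcard : K.card = 14)
    (a : ℕ → ℕ)
    (ha : ∀ i, a i = Nat.card {L : Submodule (ZMod 7) (Fin 3 → ZMod 7) //
        finrank (ZMod 7) L = 2 ∧ (K.filter fun P => P ≤ L).card = i})
    (h0 : a 0 = 11) (h2 : a 2 = 31) (h3 : a 3 = 10) (h4 : a 4 = 5)
    (hother : ∀ i, i ≠ 0 → i ≠ 2 → i ≠ 3 → i ≠ 4 → a i = 0) :
    False := by
  exact Stmt17Aux.main K hpts hcard a ha h3 hother
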